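/- The TNN proximal problem separates over Fourier-domain frontal slices: for an n1 × n2 × n3 tensor A and β > 0, a tensor Y minimizes ‖Y‖_TNN + (β/2)‖A − Y‖_F² over all n1 × n2 × n3 tensors if and only if, for every k, the k-th frontal slice Ȳ^(k) of the mode-3 DFT of Y minimizes the function M ↦ ‖M‖_* + (β/(2·n3))·‖Ā^(k) − M‖_F² over ℂ^{n1×n2}. -/

import Mathlib

open Matrix
open scoped BigOperators ComplexConjugate

noncomputable section

/-- Circular convolution of two vectors of length `n`, indexed by `ZMod n`. -/
def cconv {n : ℕ} [NeZero n] (a b : ZMod n → ℂ) : ZMod n → ℂ :=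
  fun k => ∑ t : ZMod n, a t * b (k - t)

/-- Unnormalized discrete Fourier transform with ω = exp(-2πi/n):
`dft x k = ∑ t, x t * ω ^ (k*t)`. -/
def dft {n : ℕ} [NeZero n] (x : ZMod n → ℂ) : ZMod n → ℂ :=
  fun k => ∑ t : ZMod n, x t * Complex.exp (-(2 * Real.pi * Complex.I) / n) ^ (k * t).val

/-- A third-order complex tensor of size n1 × n2 × n3 (third index taken modulo n3). -/
abbrev Tensor (n1 n2 n3 : ℕ) := Fin n1 → Fin n2 → ZMod n3 → ℂ

/-- The t-product: the (i,j)-th mode-3 tube of `A ∗ B` is `∑ k, A(i,k,·) ⋆ B(k,j,·)`. -/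
def tProd {n1 n2 n4 n3 : ℕ} [NeZero n3] (A : Tensor n1 n2 n3) (B : Tensor n2 n4 n3) :
    Tensor n1 n4 n3 :=
  fun i j => ∑ k : Fin n2, cconv (A i k) (B k j)

/-- Mode-3 DFT: apply the DFT to every mode-3 tube. -/
def mdft {n1 n2 n3 : ℕ} [NeZero n3] (X : Tensor n1 n2 n3) : Tensor n1 n2 n3 :=
  fun i j => dft (X i j)

/-- The k-th frontal fslice of a tensor, as a matrix. -/
def fslice {n1 n2 n3 : ℕ} (X : Tensor n1 n2 n3) (k : ZMod n3) : Matrix (Fin n1) (Fin n2) ℂ :=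
  Matrix.of fun i j => X i j k

/-- Conjugate transpose of a tensor: conjugate-transpose each frontal fslice and reverse
the order of the transposed slices 2 through n3, i.e. `Xᴴ(i,j,t) = conj (X j i (-t))`. -/
def tconj {n1 n2 n3 : ℕ} (X : Tensor n1 n2 n3) : Tensor n2 n1 n3 :=
  fun i j t => (starRingEnd ℂ) (X j i (-t))

/-- The identity tensor: first frontal fslice is the identity matrix, others are zero. -/
def tId (n n3 : ℕ) : Tensor n n n3 :=
  fun i j t => if t = 0 ∧ i = j then 1 else 0

/-- A tensor `Q` is orthogonal if `Q ∗ Qᴴ = Qᴴ ∗ Q = I`. -/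
def TOrthogonal {n n3 : ℕ} [NeZero n3] (Q : Tensor n n n3) : Prop :=
  tProd Q (tconj Q) = tId n n3 ∧ tProd (tconj Q) Q = tId n n3

/-- A tensor is f-diagonal if each of its frontal slices is a diagonal matrix. -/
def FDiagonal {n1 n2 n3 : ℕ} (S : Tensor n1 n2 n3) : Prop :=
  ∀ (i : Fin n1) (j : Fin n2) (k : ZMod n3), (i : ℕ) ≠ (j : ℕ) → S i j k = 0

/-- Frobenius norm of a tensor. -/
def frob {n1 n2 n3 : ℕ} [NeZero n3] (X : Tensor n1 n2 n3) : ℝ :=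
  Real.sqrt (∑ i : Fin n1, ∑ j : Fin n2, ∑ t : ZMod n3, ‖X i j t‖ ^ 2)

/-- Frobenius norm of a matrix. -/
def frobM {m n : ℕ} (M : Matrix (Fin m) (Fin n) ℂ) : ℝ :=
  Real.sqrt (∑ i : Fin m, ∑ j : Fin n, ‖M i j‖ ^ 2)

/-- Nuclear norm of a matrix: the sum of its singular values,
i.e. of the square roots of the eigenvalues of `Mᴴ * M`. -/
def nuclearNorm {m n : ℕ} (M : Matrix (Fin m) (Fin n) ℂ) : ℝ :=
  ∑ j : Fin n, Real.sqrt ((Matrix.isHermitian_conjTranspose_mul_self M).eigenvalues j)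

/-- The tensor nuclear norm: sum of the nuclear norms of the Fourier-domain frontal slices. -/
def tnn {n1 n2 n3 : ℕ} [NeZero n3] (X : Tensor n1 n2 n3) : ℝ :=
  ∑ k : ZMod n3, nuclearNorm (fslice (mdft X) k)



namespace TnnAux

variable {n : ℕ} [NeZero n]

def om (n : ℕ) : ℂ := Complex.exp (-(2 * Real.pi * Complex.I) / n)

lemma om_pow_n : om n ^ n = 1 := by
  rw [om, ← Complex.exp_nat_mul]
  have hn : (n:ℂ) ≠ 0 := Nat.cast_ne_zero.mpr (NeZero.ne n)
  rw [show (n:ℂ) * (-(2 * Real.pi * Complex.I) / n) = -(2 * Real.pi * Complex.I) by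
    field_simp]
  rw [Complex.exp_neg, Complex.exp_two_pi_mul_I, inv_one]

lemma om_primitive : IsPrimitiveRoot (om n) n := by
  have h := Complex.isPrimitiveRoot_exp n (NeZero.ne n)
  have : om n = (Complex.exp (2 * Real.pi * Complex.I / n))⁻¹ := by
    rw [om, ← Complex.exp_neg, neg_div]
  rw [this]
  exact h.inv

def ze (a : ZMod n) : ℂ := om n ^ a.val

lemma om_pow_mod (m : ℕ) : om n ^ m = om n ^ (m % n) := by
  conv_lhs => rw [← Nat.mod_add_div m n]
  rw [pow_add, pow_mul, om_pow_n, one_pow, mul_one]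

lemma ze_add (a b : ZMod n) : ze (a + b) = ze a * ze b := by
  rw [ze, ze, ze, ← pow_add, ZMod.val_add, ← om_pow_mod]

lemma ze_zero : ze (0 : ZMod n) = 1 := by simp [ze, ZMod.val_zero]

lemma ze_ne_zero (a : ZMod n) : ze a ≠ 0 :=
  pow_ne_zero _ ((om_primitive (n := n)).ne_zero (NeZero.ne n))

lemma ze_neg (a : ZMod n) : ze (-a) * ze a = 1 := by
  rw [← ze_add, neg_add_cancel, ze_zero]

lemma conj_ze (a : ZMod n) : (starRingEnd ℂ) (ze a) = ze (-a) := by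
  have habs : ‖ze (n := n) a‖ = 1 := by
    rw [ze, norm_pow]
    rw [om, show -(2 * (Real.pi:ℂ) * Complex.I) / n = ((-(2*Real.pi)/n : ℝ) : ℂ) * Complex.I by
      push_cast; ring]
    rw [Complex.norm_exp_ofReal_mul_I, one_pow]
  have h1 : ze (n := n) a * (starRingEnd ℂ) (ze a) = 1 := by
    rw [Complex.mul_conj, ← Complex.ofReal_one]
    rw [show Complex.normSq (ze (n := n) a) = 1 by
      rw [← Complex.sq_norm, habs, one_pow]]
  have h2 : ze (n := n) a * ze (-a) = 1 := by rw [mul_comm]; exact ze_neg a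
  exact mul_left_cancel₀ (ze_ne_zero a) (h1.trans h2.symm)

lemma ze_nsmul (m : ℕ) (a : ZMod n) : ze ((m : ZMod n) * a) = ze a ^ m := by
  induction m with
  | zero => simp [ze_zero]
  | succ m ih =>
      have h : ((m+1 : ℕ) : ZMod n) * a = (m:ℕ) * a + a := by push_cast; ring
      rw [h, ze_add, ih, pow_succ]

lemma sum_ze_val (f : ℕ → ℂ) : ∑ k : ZMod n, f k.val = ∑ i ∈ Finset.range n, f i := by
  refine Finset.sum_nbij' (fun k => k.val) (fun i => (i : ZMod n)) ?_ ?_ ?_ ?_ ?_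
  · intro k _; exact Finset.mem_range.mpr (ZMod.val_lt k)
  · intro i _; exact Finset.mem_univ _
  · intro k _; exact ZMod.natCast_zmod_val k
  · intro i hi; exact ZMod.val_cast_of_lt (Finset.mem_range.mp hi)
  · intro k _; rfl

lemma sum_ze_mul (c : ZMod n) : ∑ k : ZMod n, ze (k * c) = if c = 0 then (n : ℂ) else 0 := by
  split_ifs with hc
  · subst hc; simp [ze_zero, Finset.card_univ]
  · have hz1 : ze (n := n) c ≠ 1 := by
      rw [ze]
      refine (om_primitive (n := n)).pow_ne_one_of_pos_of_lt ?_ (ZMod.val_lt c)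
      exact (fun h => hc (by rwa [← ZMod.val_eq_zero]))
    have hzn : ze (n := n) c ^ n = 1 := by
      rw [ze, ← pow_mul, mul_comm, pow_mul, om_pow_n, one_pow]
    have : ∀ k : ZMod n, ze (k * c) = ze (n := n) c ^ k.val := by
      intro k; rw [← ze_nsmul, ZMod.natCast_zmod_val]
    simp_rw [this]
    rw [sum_ze_val (fun i => ze (n := n) c ^ i), geom_sum_eq hz1, hzn, sub_self, zero_div]

end TnnAux

open TnnAux

lemma dft_eq_ze {n : ℕ} [NeZero n] (x : ZMod n → ℂ) (k : ZMod n) :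
    dft x k = ∑ t : ZMod n, x t * ze (k * t) := rfl

/-- Parseval in complex form. -/
lemma parseval {n : ℕ} [NeZero n] (x : ZMod n → ℂ) :
    ∑ k : ZMod n, ‖dft x k‖ ^ 2 = n * ∑ t : ZMod n, ‖x t‖ ^ 2 := by
  have key : ∑ k : ZMod n, (dft x k * (starRingEnd ℂ) (dft x k))
      = (n : ℂ) * ∑ t : ZMod n, (x t * (starRingEnd ℂ) (x t)) := by
    simp_rw [dft_eq_ze, map_sum, _root_.map_mul, conj_ze, Finset.sum_mul_sum, Finset.mul_sum]
    rw [Finset.sum_comm]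
    have inner : ∀ s : ZMod n, ∑ k : ZMod n, ∑ t : ZMod n,
        x s * ze (k * s) * ((starRingEnd ℂ) (x t) * ze (-(k * t)))
        = x s * (starRingEnd ℂ) (x s) * n := by
      intro s
      have : ∀ k t : ZMod n, x s * ze (k * s) * ((starRingEnd ℂ) (x t) * ze (-(k * t)))
          = x s * (starRingEnd ℂ) (x t) * ze (k * (s - t)) := by
        intro k t
        rw [show k * (s - t) = k * s + -(k * t) by ring, ze_add]; ring
      simp_rw [this]
      rw [Finset.sum_comm]
      have : ∀ t : ZMod n, ∑ k : ZMod n, x s * (starRingEnd ℂ) (x t) * ze (k * (s - t))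
          = x s * (starRingEnd ℂ) (x t) * (if s - t = 0 then (n:ℂ) else 0) := by
        intro t; rw [← Finset.mul_sum, sum_ze_mul]
      simp_rw [this]
      rw [Finset.sum_eq_single s]
      · simp
      · intro t _ hts
        rw [if_neg (fun h => hts (by linear_combination -h)), mul_zero]
      · intro h; exact absurd (Finset.mem_univ s) h
    simp_rw [inner]
    rw [← Finset.sum_mul, mul_comm, Finset.mul_sum]
  rw [← Complex.ofReal_inj]
  push_cast
  simp_rw [show ∀ z:ℂ, ((‖z‖ : ℂ))^2 = z * (starRingEnd ℂ) z from fun z => by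
    rw [← Complex.ofReal_pow, Complex.sq_norm, Complex.mul_conj]]
  exact key
lemma dft_zero_imp {n : ℕ} [NeZero n] (x : ZMod n → ℂ) (h : ∀ k, dft x k = 0) : x = 0 := by
  have hp := parseval x
  simp only [h] at hp
  simp only [norm_zero, ne_eq, OfNat.ofNat_ne_zero, not_false_eq_true, zero_pow,
    Finset.sum_const_zero] at hp
  have hn : (0:ℝ) < n := by exact_mod_cast Nat.pos_of_ne_zero (NeZero.ne n)
  have hsum : ∑ t : ZMod n, ‖x t‖ ^ 2 = 0 := by
    by_contra hne
    have : 0 < ∑ t : ZMod n, ‖x t‖ ^ 2 :=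
      lt_of_le_of_ne (Finset.sum_nonneg fun t _ => sq_nonneg _) (Ne.symm hne)
    nlinarith
  funext t
  have := (Finset.sum_eq_zero_iff_of_nonneg (fun t _ => sq_nonneg (‖x t‖))).mp
    hsum t (Finset.mem_univ t)
  have : ‖x t‖ = 0 := by nlinarith [norm_nonneg (x t)]
  simpa using this

def mdftL (n1 n2 n3 : ℕ) [NeZero n3] : Tensor n1 n2 n3 →ₗ[ℂ] Tensor n1 n2 n3 where
  toFun := mdft
  map_add' X Y := by
    funext i j k
    simp only [mdft, dft, Pi.add_apply, add_mul, Finset.sum_add_distrib]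
  map_smul' c X := by
    funext i j k
    simp only [mdft, dft, Pi.smul_apply, smul_eq_mul, RingHom.id_apply, Finset.mul_sum]
    exact Finset.sum_congr rfl fun t _ => by ring

lemma mdft_injective {n1 n2 n3 : ℕ} [NeZero n3] :
    Function.Injective (mdft (n1 := n1) (n2 := n2) (n3 := n3)) := by
  have : Function.Injective (mdftL n1 n2 n3) := by
    rw [← LinearMap.ker_eq_bot, LinearMap.ker_eq_bot']
    intro X hX
    funext i j k
    have h0 : ∀ k, dft (X i j) k = 0 := fun k => congrFun (congrFun (congrFun hX i) j) k
    exact congrFun (dft_zero_imp (X i j) h0) k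
  exact this

lemma mdft_surjective {n1 n2 n3 : ℕ} [NeZero n3] :
    Function.Surjective (mdft (n1 := n1) (n2 := n2) (n3 := n3)) :=
  LinearMap.surjective_of_injective (f := mdftL n1 n2 n3) mdft_injective

lemma frob_sq {n1 n2 n3 : ℕ} [NeZero n3] (X : Tensor n1 n2 n3) :
    frob X ^ 2 = ∑ i : Fin n1, ∑ j : Fin n2, ∑ t : ZMod n3, ‖X i j t‖ ^ 2 :=
  Real.sq_sqrt (Finset.sum_nonneg fun _ _ => Finset.sum_nonneg fun _ _ =>
    Finset.sum_nonneg fun _ _ => sq_nonneg _)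

lemma frobM_sq {m n : ℕ} (M : Matrix (Fin m) (Fin n) ℂ) :
    frobM M ^ 2 = ∑ i : Fin m, ∑ j : Fin n, ‖M i j‖ ^ 2 :=
  Real.sq_sqrt (Finset.sum_nonneg fun _ _ => Finset.sum_nonneg fun _ _ => sq_nonneg _)

lemma frob_parseval {n1 n2 n3 : ℕ} [NeZero n3] (X : Tensor n1 n2 n3) :
    ∑ k : ZMod n3, frobM (fslice (mdft X) k) ^ 2 = n3 * frob X ^ 2 := by
  simp_rw [frobM_sq, frob_sq, fslice, Matrix.of_apply]
  rw [Finset.sum_comm]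
  rw [Finset.mul_sum]
  refine Finset.sum_congr rfl fun i _ => ?_
  rw [Finset.sum_comm, Finset.mul_sum]
  refine Finset.sum_congr rfl fun j _ => ?_
  exact parseval (X i j)

lemma fslice_mdft_sub {n1 n2 n3 : ℕ} [NeZero n3] (A W : Tensor n1 n2 n3) (k : ZMod n3) :
    fslice (mdft A) k - fslice (mdft W) k = fslice (mdft (A - W)) k := by
  ext i j
  simp only [fslice, mdft, dft, Matrix.sub_apply, Matrix.of_apply, Pi.sub_apply, sub_mul,
    Finset.sum_sub_distrib]

lemma obj_eq {n1 n2 n3 : ℕ} [NeZero n3] (A W : Tensor n1 n2 n3) (β : ℝ) :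
    tnn W + β / 2 * frob (A - W) ^ 2
      = ∑ k : ZMod n3, (nuclearNorm (fslice (mdft W) k)
          + β / (2 * n3) * frobM (fslice (mdft A) k - fslice (mdft W) k) ^ 2) := by
  have hn : (0:ℝ) < n3 := by exact_mod_cast Nat.pos_of_ne_zero (NeZero.ne n3)
  rw [Finset.sum_add_distrib]
  congr 1
  simp_rw [fslice_mdft_sub]
  rw [← Finset.mul_sum, frob_parseval]
  field_simp

/-- the TNN proximal problem separates over Fourier-domain frontal slices:
`Y` minimizes `‖·‖_TNN + (β/2)‖A − ·‖_F²` iff for every `k` the slice `Ȳ⁽ᵏ⁾` minimizes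
`M ↦ ‖M‖_* + (β/(2·n3))‖Ā⁽ᵏ⁾ − M‖_F²`. -/
theorem tnn_prox_separates {n1 n2 n3 : ℕ} [NeZero n3]
    (A : Tensor n1 n2 n3) (β : ℝ) (hβ : 0 < β) (Y : Tensor n1 n2 n3) :
    (∀ W : Tensor n1 n2 n3,
        tnn Y + β / 2 * frob (A - Y) ^ 2 ≤ tnn W + β / 2 * frob (A - W) ^ 2)
    ↔ (∀ (k : ZMod n3) (M : Matrix (Fin n1) (Fin n2) ℂ),
        nuclearNorm (fslice (mdft Y) k)
            + β / (2 * n3) * frobM (fslice (mdft A) k - fslice (mdft Y) k) ^ 2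
          ≤ nuclearNorm M + β / (2 * n3) * frobM (fslice (mdft A) k - M) ^ 2) := by
  constructor
  · intro h k0 M
    obtain ⟨W, hW⟩ := mdft_surjective (fun i j t => if t = k0 then M i j else mdft Y i j t)
    have hslice : ∀ k, fslice (mdft W) k = if k = k0 then M else fslice (mdft Y) k := by
      intro k
      ext i j
      rw [hW]
      by_cases hk : k = k0 <;> simp [fslice, mdft, hk]
    have key := h W
    rw [obj_eq A Y β, obj_eq A W β] at key
    set f : ZMod n3 → ℝ := fun k => nuclearNorm (fslice (mdft Y) k)
      + β / (2 * n3) * frobM (fslice (mdft A) k - fslice (mdft Y) k) ^ 2 with hf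
    set g : ZMod n3 → ℝ := fun k => nuclearNorm (fslice (mdft W) k)
      + β / (2 * n3) * frobM (fslice (mdft A) k - fslice (mdft W) k) ^ 2 with hg
    rw [← Finset.add_sum_erase _ f (Finset.mem_univ k0),
      ← Finset.add_sum_erase _ g (Finset.mem_univ k0)] at key
    have hfg : ∑ k ∈ Finset.univ.erase k0, g k = ∑ k ∈ Finset.univ.erase k0, f k := by
      refine Finset.sum_congr rfl fun k hk => ?_
      have hne : k ≠ k0 := (Finset.mem_erase.mp hk).1
      simp only [hf, hg, hslice k, if_neg hne]
    rw [hfg] at key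
    have hle : f k0 ≤ g k0 := by linarith
    simp only [hf, hg, hslice k0, if_pos rfl] at hle
    exact hle
  · intro h W
    rw [obj_eq A Y β, obj_eq A W β]
    exact Finset.sum_le_sum fun k _ => h k (fslice (mdft W) k)

end
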